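/- arXiv:2406.00949 — 3 statements merged into one kernel-verified Lean document; each statement's English description precedes it below -/
import Mathlib

section
/- Let d ≥ 2, let h : ℝ^d → ℝ be a homogeneous polynomial of degree m ≥ 2, and let ξ_0 = (ξ_0', s_d) ∈ ℝ^{d−1} × ℝ with |ξ_0| = 1, s_d > 0 and ∇h(ξ_0) = 0. Define h_S : B_{ℝ^{d−1}}(0,1) → ℝ by h_S(ξ') = h(ξ', √(1 − |ξ'|²)) (the restriction of h to the unit sphere in the standard upper-hemisphere chart). Then rank Hess h_S(ξ_0') = rank Hess h(ξ_0). -/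
/-- The Hessian matrix of `f : ℝ^d → ℝ` at `x`. -/
noncomputable def hessMat {d : ℕ} (f : (Fin d → ℝ) → ℝ) (x : Fin d → ℝ) :
    Matrix (Fin d) (Fin d) ℝ :=
  Matrix.of fun i j => iteratedFDeriv ℝ 2 f x ![Pi.single i 1, Pi.single j 1]

lemma contDiff_mvpoly {d : ℕ} (p : MvPolynomial (Fin d) ℝ) :
    ContDiff ℝ ⊤ (fun x : Fin d → ℝ => MvPolynomial.eval x p) := by
  induction p using MvPolynomial.induction_on with
  | C a => simpa using contDiff_const
  | add p q hp hq => simpa using hp.add hq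
  | mul_X p i hp => simpa using hp.mul (contDiff_apply ℝ ℝ i)

lemma eval_smul_homog {d m : ℕ} {p : MvPolynomial (Fin d) ℝ} (hp : p.IsHomogeneous m)
    (t : ℝ) (x : Fin d → ℝ) :
    MvPolynomial.eval (t • x) p = t ^ m * MvPolynomial.eval x p := by
  rw [MvPolynomial.eval_eq', MvPolynomial.eval_eq', Finset.mul_sum]
  apply Finset.sum_congr rfl
  intro e he
  have hc : MvPolynomial.coeff e p ≠ 0 := MvPolynomial.mem_support_iff.mp he
  have hdeg : ∑ i, e i = m := by
    have := hp hc
    change Finsupp.weight (fun _ => (1 : ℕ)) e = m at this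
    rw [← Finsupp.degree_eq_weight_one] at this
    rw [← this, Finsupp.degree]
    exact (Finset.sum_subset (Finset.subset_univ _)
      (fun i _ hi => Finsupp.notMem_support_iff.mp hi)).symm
  have : ∀ i : Fin d, (t • x) i ^ e i = t ^ e i * x i ^ e i := by
    intro i; simp [mul_pow]
  rw [Finset.prod_congr rfl (fun i _ => this i), Finset.prod_mul_distrib,
    Finset.prod_pow_eq_pow_sum, hdeg]
  ring


open Matrix

lemma rank_conj {d n : ℕ} (H : Matrix (Fin d) (Fin d) ℝ) (J : Matrix (Fin d) (Fin n) ℝ)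
    (u : Fin d → ℝ)
    (hHu : H.mulVec u = 0) (huH : Matrix.vecMul u H = 0) (huJ : Matrix.vecMul u J = 0)
    (hJ : Function.Injective J.mulVec) (hu : u ≠ 0) (hdn : d = n + 1) :
    (Jᵀ * H * J).rank = H.rank := by
  classical
  set jl := J.mulVecLin with hjl
  set f := H.mulVecLin with hf
  set jt := Jᵀ.mulVecLin with hjt
  -- u not in range of jl, and u orthogonal to range jl
  have horthJ : ∀ x : Fin n → ℝ, u ⬝ᵥ J.mulVec x = 0 := by
    intro x
    rw [Matrix.dotProduct_mulVec, huJ, zero_dotProduct]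
  have huu : u ⬝ᵥ u ≠ 0 := by
    rwa [ne_eq, dotProduct_self_eq_zero]
  have hunotin : u ∉ LinearMap.range jl := by
    rintro ⟨x, rfl⟩
    exact huu (horthJ x)
  -- T = range jl ⊔ span u = ⊤
  have hTtop : LinearMap.range jl ⊔ Submodule.span ℝ {u} = ⊤ := by
    have hlt : LinearMap.range jl < LinearMap.range jl ⊔ Submodule.span ℝ {u} := by
      refine lt_of_le_of_ne le_sup_left (fun hEq => ?_)
      exact hunotin (hEq ▸ (le_sup_right :
        Submodule.span ℝ {u} ≤ LinearMap.range jl ⊔ Submodule.span ℝ {u})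
        (Submodule.mem_span_singleton_self u))
    have hinj : Function.Injective jl := fun x y hxy => hJ hxy
    have hr : Module.finrank ℝ (LinearMap.range jl) = n := by
      have := LinearMap.finrank_range_of_inj hinj
      simpa using this
    have h1' := Submodule.finrank_lt_finrank_of_lt hlt
    rw [hr] at h1'
    have h2 : Module.finrank ℝ (LinearMap.range jl ⊔ Submodule.span ℝ {u} :
        Submodule ℝ (Fin d → ℝ)) ≤ d := by
      have := Submodule.finrank_le (LinearMap.range jl ⊔ Submodule.span ℝ {u} :
        Submodule ℝ (Fin d → ℝ))
      simpa using this
    apply Submodule.eq_top_of_finrank_eq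
    simp only [Module.finrank_pi, Fintype.card_fin]
    omega
  -- Step A: range (f ∘ jl) = range f
  have hfu : f u = 0 := hHu
  have hrangeA : LinearMap.range (f ∘ₗ jl) = LinearMap.range f := by
    refine le_antisymm (LinearMap.range_comp_le_range _ _) ?_
    rintro _ ⟨v, rfl⟩
    have hv : v ∈ LinearMap.range jl ⊔ Submodule.span ℝ {u} := hTtop ▸ Submodule.mem_top
    obtain ⟨a, ha, b, hb, rfl⟩ := Submodule.mem_sup.mp hv
    obtain ⟨x, rfl⟩ := ha
    obtain ⟨c, rfl⟩ := Submodule.mem_span_singleton.mp hb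
    refine ⟨x, ?_⟩
    show f (jl x) = f (jl x + c • u)
    rw [map_add, LinearMap.map_smul, hfu, smul_zero, add_zero]
  -- Step B: jt injective on range f
  have hker : ∀ y ∈ LinearMap.range f, jt y = 0 → y = 0 := by
    intro y hy hjty
    obtain ⟨v, rfl⟩ := hy
    have hyu : u ⬝ᵥ H.mulVec v = 0 := by
      rw [Matrix.dotProduct_mulVec, huH, zero_dotProduct]
    have hyJ : ∀ x : Fin n → ℝ, H.mulVec v ⬝ᵥ J.mulVec x = 0 := by
      intro x
      have : Jᵀ.mulVec (H.mulVec v) = 0 := hjty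
      rw [Matrix.mulVec_transpose] at this
      rw [Matrix.dotProduct_mulVec, this, zero_dotProduct]
    have hself : H.mulVec v ⬝ᵥ H.mulVec v = 0 := by
      have hv : H.mulVec v ∈ LinearMap.range jl ⊔ Submodule.span ℝ {u} :=
        hTtop ▸ Submodule.mem_top
      obtain ⟨a, ha, b, hb, hab⟩ := Submodule.mem_sup.mp hv
      obtain ⟨x, rfl⟩ := ha
      obtain ⟨c, rfl⟩ := Submodule.mem_span_singleton.mp hb
      calc H.mulVec v ⬝ᵥ H.mulVec v = H.mulVec v ⬝ᵥ (J.mulVec x + c • u) := by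
              rw [← hab]; rfl
        _ = H.mulVec v ⬝ᵥ J.mulVec x + c * (H.mulVec v ⬝ᵥ u) := by
            rw [dotProduct_add, dotProduct_smul]; ring_nf
        _ = 0 := by
            rw [hyJ, dotProduct_comm, hyu]; ring
    exact dotProduct_self_eq_zero.mp hself
  -- conclude
  have hcomp : (Jᵀ * H * J).mulVecLin = jt ∘ₗ (f ∘ₗ jl) := by
    rw [Matrix.mul_assoc, Matrix.mulVecLin_mul, Matrix.mulVecLin_mul]
  rw [Matrix.rank, Matrix.rank, hcomp]
  rw [LinearMap.range_comp, hrangeA]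
  let r := jt.domRestrict (LinearMap.range f)
  have hkerr : LinearMap.ker r = ⊥ := by
    rw [LinearMap.ker_eq_bot']
    rintro ⟨y, hy⟩ hry
    have : jt y = 0 := hry
    exact Subtype.ext (hker y hy this)
  have hranger : LinearMap.range r = (LinearMap.range f).map jt :=
    LinearMap.range_domRestrict _ _
  have := LinearMap.finrank_range_add_finrank_ker r
  rw [hkerr, hranger] at this
  simp only [finrank_bot, add_zero] at this
  rw [this]


open ContinuousLinearMap

variable {n : ℕ}

noncomputable def Wmap (x : Fin n → ℝ) : (Fin n → ℝ) →L[ℝ] ℝ :=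
  ∑ j, (2 * x j) • ContinuousLinearMap.proj j

noncomputable def qq (x : Fin n → ℝ) : ℝ := 1 - ∑ j, x j ^ 2

noncomputable def Dphi (x : Fin n → ℝ) : (Fin n → ℝ) →L[ℝ] ℝ :=
  (1 / (2 * Real.sqrt (qq x))) • (-(Wmap x))

noncomputable def Emb : (Fin n → ℝ) →L[ℝ] (Fin (n + 1) → ℝ) :=
  ContinuousLinearMap.pi (Fin.lastCases (motive := fun _ => (Fin n → ℝ) →L[ℝ] ℝ) 0 fun k => ContinuousLinearMap.proj k)

noncomputable def Tmap : ((Fin n → ℝ) →L[ℝ] ℝ) →L[ℝ] ((Fin n → ℝ) →L[ℝ] (Fin (n + 1) → ℝ)) :=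
  LinearMap.toContinuousLinearMap
  { toFun := fun s => ContinuousLinearMap.pi (Fin.lastCases (motive := fun _ => (Fin n → ℝ) →L[ℝ] ℝ) s fun _ => 0)
    map_add' := by
      intro s t
      ext v i
      induction i using Fin.lastCases <;>
        simp [ContinuousLinearMap.pi_apply]
    map_smul' := by
      intro c s
      ext v i
      induction i using Fin.lastCases <;>
        simp [ContinuousLinearMap.pi_apply] }

lemma Gval_pi (s : (Fin n → ℝ) →L[ℝ] ℝ) :
    Emb + Tmap s = ContinuousLinearMap.pi
      (Fin.lastCases (motive := fun _ => (Fin n → ℝ) →L[ℝ] ℝ) s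
        fun k => ContinuousLinearMap.proj k) := by
  ext v i
  induction i using Fin.lastCases <;>
    simp [Emb, Tmap, LinearMap.coe_toContinuousLinearMap', ContinuousLinearMap.pi_apply]

lemma Gval_cast (s : (Fin n → ℝ) →L[ℝ] ℝ) (v : Fin n → ℝ) (i : Fin n) :
    (Emb + Tmap s : (Fin n → ℝ) →L[ℝ] (Fin (n + 1) → ℝ)) v (Fin.castSucc i) = v i := by
  rw [Gval_pi]; simp [ContinuousLinearMap.pi_apply]

lemma Gval_last (s : (Fin n → ℝ) →L[ℝ] ℝ) (v : Fin n → ℝ) :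
    (Emb + Tmap s : (Fin n → ℝ) →L[ℝ] (Fin (n + 1) → ℝ)) v (Fin.last n) = s v := by
  rw [Gval_pi]; simp [ContinuousLinearMap.pi_apply]

lemma hasFDerivAt_qq (x : Fin n → ℝ) : HasFDerivAt qq (-(Wmap x)) x := by
  have hsum : HasFDerivAt (fun x : Fin n → ℝ => ∑ j, x j ^ 2) (Wmap x) x := by
    have h1 : ∀ j : Fin n, HasFDerivAt (fun x : Fin n → ℝ => x j ^ 2)
        ((2 * x j) • (ContinuousLinearMap.proj j : (Fin n → ℝ) →L[ℝ] ℝ)) x := by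
      intro j
      have hm := (hasFDerivAt_apply (𝕜 := ℝ) j x).mul (hasFDerivAt_apply (𝕜 := ℝ) j x)
      have h2 : (fun x : Fin n → ℝ => x j ^ 2) = fun x : Fin n → ℝ => x j * x j := by
        funext y; rw [sq]
      have h3 : (2 * x j) • (ContinuousLinearMap.proj j : (Fin n → ℝ) →L[ℝ] ℝ)
          = x j • ContinuousLinearMap.proj j + x j • ContinuousLinearMap.proj j := by
        rw [two_mul, add_smul]
      rw [h2, h3]
      exact hm
    exact HasFDerivAt.fun_sum fun j _ => h1 j
  exact hsum.const_sub 1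

lemma hasFDerivAt_phi (x : Fin n → ℝ) (hx : 0 < qq x) :
    HasFDerivAt (fun y => Real.sqrt (qq y)) (Dphi x) x :=
  (Real.hasDerivAt_sqrt hx.ne').comp_hasFDerivAt x (hasFDerivAt_qq x)

lemma hasFDerivAt_g (x : Fin n → ℝ) (hx : 0 < qq x) :
    HasFDerivAt (fun y => (Fin.snoc y (Real.sqrt (qq y)) : Fin (n + 1) → ℝ))
      (Emb + Tmap (Dphi x)) x := by
  rw [Gval_pi]
  refine hasFDerivAt_pi'.mpr fun i => ?_
  rw [ContinuousLinearMap.proj_pi]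
  induction i using Fin.lastCases with
  | last =>
    simp only [Fin.snoc_last, Fin.lastCases_last]
    exact hasFDerivAt_phi x hx
  | cast k =>
    simp only [Fin.snoc_castSucc, Fin.lastCases_castSucc]
    exact hasFDerivAt_apply (𝕜 := ℝ) k x

lemma differentiableAt_Dphi (x : Fin n → ℝ) (hx : 0 < qq x) :
    DifferentiableAt ℝ (Dphi (n := n)) x := by
  have h1 : DifferentiableAt ℝ (fun y : Fin n → ℝ => 1 / (2 * Real.sqrt (qq y))) x := by
    have hq : DifferentiableAt ℝ (qq (n := n)) x := (hasFDerivAt_qq x).differentiableAt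
    have hs : DifferentiableAt ℝ (fun y : Fin n → ℝ => Real.sqrt (qq y)) x :=
      (hasFDerivAt_phi x hx).differentiableAt
    have hne : 2 * Real.sqrt (qq x) ≠ 0 := by
      have := Real.sqrt_pos.mpr hx
      positivity
    have hden : DifferentiableAt ℝ (fun y : Fin n → ℝ => 2 * Real.sqrt (qq y)) x :=
      hs.const_mul 2
    simpa only [one_div, Pi.inv_def] using hden.inv hne
  have h2 : DifferentiableAt ℝ (fun y : Fin n → ℝ => -(Wmap y)) x := by
    refine DifferentiableAt.neg ?_
    show DifferentiableAt ℝ (fun y : Fin n → ℝ => ∑ j, (2 * y j) • (ContinuousLinearMap.proj j : (Fin n → ℝ) →L[ℝ] ℝ)) x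
    refine DifferentiableAt.fun_sum fun j _ => ?_
    exact (((hasFDerivAt_apply (𝕜 := ℝ) j x).differentiableAt).const_mul
      (2:ℝ)).smul (differentiableAt_const _)
  exact h1.smul h2

lemma continuous_qq : Continuous (qq (n := n)) :=
  continuous_const.sub (continuous_finset_sum _ fun j _ => (continuous_apply j).pow 2)

lemma hess_comp (h : (Fin (n + 1) → ℝ) → ℝ) (hsmooth : ContDiff ℝ ⊤ h)
    (x₀ : Fin n → ℝ) (hx₀ : 0 < qq x₀)
    (hcrit : fderiv ℝ h (Fin.snoc x₀ (Real.sqrt (qq x₀))) = 0) (k l : Fin n) :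
    hessMat (fun ξ' => h (Fin.snoc ξ' (Real.sqrt (qq ξ')))) x₀ k l =
      fderiv ℝ (fderiv ℝ h) (Fin.snoc x₀ (Real.sqrt (qq x₀)))
        ((Emb + Tmap (Dphi x₀) : (Fin n → ℝ) →L[ℝ] (Fin (n + 1) → ℝ)) (Pi.single k 1))
        ((Emb + Tmap (Dphi x₀) : (Fin n → ℝ) →L[ℝ] (Fin (n + 1) → ℝ)) (Pi.single l 1)) := by
  classical
  set g : (Fin n → ℝ) → (Fin (n + 1) → ℝ) := fun y => Fin.snoc y (Real.sqrt (qq y)) with hg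
  set G₀ : (Fin n → ℝ) →L[ℝ] (Fin (n + 1) → ℝ) := Emb + Tmap (Dphi x₀) with hG₀
  have hdiff : Differentiable ℝ h := hsmooth.differentiable (by simp)
  set Φ := fderiv ℝ (fderiv ℝ h) (g x₀) with hΦdef
  have hΦ : HasFDerivAt (fderiv ℝ h) Φ (g x₀) :=
    (((hsmooth.fderiv_right le_top).differentiable one_ne_zero) (g x₀)).hasFDerivAt
  have hUopen : IsOpen {y : Fin n → ℝ | 0 < qq y} :=
    isOpen_lt continuous_const continuous_qq
  have hev : (fderiv ℝ (fun y => h (g y))) =ᶠ[nhds x₀]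
      fun y => (fderiv ℝ h (g y)).comp (Emb + Tmap (Dphi y)) := by
    filter_upwards [hUopen.mem_nhds hx₀] with y hy
    exact ((hdiff (g y)).hasFDerivAt.comp y (hasFDerivAt_g y hy)).fderiv
  have hc : HasFDerivAt (fun y => fderiv ℝ h (g y)) (Φ.comp G₀) x₀ :=
    hΦ.comp x₀ (hasFDerivAt_g x₀ hx₀)
  have hdG : HasFDerivAt (fun y : Fin n → ℝ =>
        (Emb + Tmap (Dphi y) : (Fin n → ℝ) →L[ℝ] (Fin (n + 1) → ℝ)))
      (Tmap.comp (fderiv ℝ (Dphi (n := n)) x₀)) x₀ := by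
    have h1 : HasFDerivAt (fun y : Fin n → ℝ => Tmap (Dphi y))
        (Tmap.comp (fderiv ℝ (Dphi (n := n)) x₀)) x₀ :=
      Tmap.hasFDerivAt.comp x₀ (differentiableAt_Dphi x₀ hx₀).hasFDerivAt
    simpa using h1.const_add Emb
  have hL := hc.clm_comp hdG
  have hL2 := (hev.hasFDerivAt_iff.mpr hL).fderiv
  show iteratedFDeriv ℝ 2 (fun y => h (g y)) x₀ ![Pi.single k 1, Pi.single l 1] = _
  rw [iteratedFDeriv_two_apply, hL2]
  simp only [Matrix.cons_val_zero, Matrix.cons_val_one, Matrix.head_cons,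
    ContinuousLinearMap.add_apply, ContinuousLinearMap.comp_apply,
    ContinuousLinearMap.compL_apply, ContinuousLinearMap.flip_apply, hcrit,
    ContinuousLinearMap.zero_comp, ContinuousLinearMap.zero_apply, zero_add]
  rw [show fderiv ℝ h (g x₀) = 0 from hcrit, ContinuousLinearMap.zero_apply, zero_add]
  rfl

/-- for a homogeneous polynomial `h` of degree `m ≥ 2` in `d = n+1 ≥ 2` real
variables, and a critical point `ξ₀ = (ξ₀', s_d)` of `h` on the unit sphere with `s_d > 0`,
the rank of the Hessian of the restriction `h_S(ξ') = h(ξ', √(1 − |ξ'|²))` of `h` to the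
sphere (in the upper-hemisphere chart) at `ξ₀'` equals the rank of the Hessian of `h`
at `ξ₀`. -/
theorem stmt_9 (n m : ℕ) (hn : 1 ≤ n) (hm : 2 ≤ m)
    (p : MvPolynomial (Fin (n + 1)) ℝ) (hp : p.IsHomogeneous m)
    (h : (Fin (n + 1) → ℝ) → ℝ) (hh : ∀ ξ, h ξ = MvPolynomial.eval ξ p)
    (ξ₀' : Fin n → ℝ) (sd : ℝ) (hsd : 0 < sd)
    (hnorm : ∑ j, (Fin.snoc ξ₀' sd : Fin (n + 1) → ℝ) j ^ 2 = 1)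
    (hcrit : fderiv ℝ h (Fin.snoc ξ₀' sd) = 0) :
    (hessMat (fun ξ' : Fin n → ℝ =>
        h (Fin.snoc ξ' (Real.sqrt (1 - ∑ j, ξ' j ^ 2)))) ξ₀').rank =
      (hessMat h (Fin.snoc ξ₀' sd)).rank := by
  classical
  have hsum' : ∑ j, ξ₀' j ^ 2 = 1 - sd ^ 2 := by
    rw [Fin.sum_univ_castSucc] at hnorm
    simp only [Fin.snoc_castSucc, Fin.snoc_last] at hnorm
    linarith
  set ξ₀ : Fin (n + 1) → ℝ := Fin.snoc ξ₀' sd with hξ₀def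
  have hsmooth : ContDiff ℝ ⊤ h := by
    have hfun : h = fun x => MvPolynomial.eval x p := funext hh
    rw [hfun]; exact contDiff_mvpoly p
  have hdiff : Differentiable ℝ h := hsmooth.differentiable (by simp)
  have hq0 : qq ξ₀' = sd ^ 2 := by simp only [qq, hsum']; ring
  have hq0pos : 0 < qq ξ₀' := by rw [hq0]; positivity
  have hsq : Real.sqrt (qq ξ₀') = sd := by rw [hq0, Real.sqrt_sq hsd.le]
  have hgξ₀ : (Fin.snoc ξ₀' (Real.sqrt (qq ξ₀')) : Fin (n + 1) → ℝ) = ξ₀ := by rw [hsq]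
  set Φ := fderiv ℝ (fderiv ℝ h) ξ₀ with hΦdef
  have hΦ : HasFDerivAt (fderiv ℝ h) Φ ξ₀ :=
    (((hsmooth.fderiv_right (m := 1) le_top).differentiable one_ne_zero) ξ₀).hasFDerivAt
  -- homogeneity and vanishing of the gradient along the ray
  have hscale : ∀ (t : ℝ) (x : Fin (n + 1) → ℝ), h (t • x) = t ^ m * h x := by
    intro t x; rw [hh, hh, eval_smul_homog hp]
  have hgradzero : ∀ t : ℝ, t ≠ 0 → fderiv ℝ h (t • ξ₀) = 0 := by
    intro t ht
    have h1 : HasFDerivAt (fun y : Fin (n + 1) → ℝ => h (t • y))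
        (t • fderiv ℝ h (t • ξ₀)) ξ₀ := by
      have hs : HasFDerivAt (fun y : Fin (n + 1) → ℝ => t • y)
          (t • ContinuousLinearMap.id ℝ (Fin (n + 1) → ℝ)) ξ₀ :=
        (hasFDerivAt_id ξ₀).const_smul t
      have h2 := (hdiff (t • ξ₀)).hasFDerivAt.comp ξ₀ hs
      have h3 : (fderiv ℝ h (t • ξ₀)).comp (t • ContinuousLinearMap.id ℝ (Fin (n + 1) → ℝ))
          = t • fderiv ℝ h (t • ξ₀) := by
        ext v; simp
      rwa [h3] at h2
    have h4 : HasFDerivAt (fun y : Fin (n + 1) → ℝ => h (t • y))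
        (t ^ m • fderiv ℝ h ξ₀) ξ₀ := by
      have heq : (fun y : Fin (n + 1) → ℝ => h (t • y)) = fun y => t ^ m * h y := by
        funext y; rw [hscale]
      rw [heq]
      exact (hdiff ξ₀).hasFDerivAt.const_mul (t ^ m)
    have h5 : t • fderiv ℝ h (t • ξ₀) = t ^ m • fderiv ℝ h ξ₀ := h1.unique h4
    rw [hcrit, smul_zero] at h5
    rcases smul_eq_zero.mp h5 with h6 | h6
    · exact absurd h6 ht
    · exact h6
  have hΦξ₀ : Φ ξ₀ = 0 := by
    have hline : HasDerivAt (fun t : ℝ => t • ξ₀) ξ₀ 1 := by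
      simpa using (hasDerivAt_id (1 : ℝ)).smul_const ξ₀
    have hΦ1 : HasFDerivAt (fderiv ℝ h) Φ ((1 : ℝ) • ξ₀) := by rwa [one_smul]
    have hψ : HasDerivAt (fun t : ℝ => fderiv ℝ h (t • ξ₀)) (Φ ξ₀) 1 :=
      hΦ1.comp_hasDerivAt (1 : ℝ) hline
    have hev : (fun t : ℝ => fderiv ℝ h (t • ξ₀)) =ᶠ[nhds (1 : ℝ)]
        fun _ => (0 : (Fin (n + 1) → ℝ) →L[ℝ] ℝ) := by
      filter_upwards [eventually_ne_nhds (one_ne_zero (α := ℝ))] with t ht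
      exact hgradzero t ht
    have hψ0 : HasDerivAt (fun t : ℝ => fderiv ℝ h (t • ξ₀))
        (0 : (Fin (n + 1) → ℝ) →L[ℝ] ℝ) 1 :=
      (hasDerivAt_const (1 : ℝ) (0 : (Fin (n + 1) → ℝ) →L[ℝ] ℝ)).congr_of_eventuallyEq hev
    exact hψ.unique hψ0
  have hsymm : ∀ v w, Φ v w = Φ w v :=
    second_derivative_symmetric (fun y => (hdiff y).hasFDerivAt) hΦ
  have hΦv : ∀ v, Φ v ξ₀ = 0 := by
    intro v; rw [hsymm v ξ₀, hΦξ₀]; rfl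
  -- decomposition of vectors and bilinear expansions
  have vec_decomp : ∀ v : Fin (n + 1) → ℝ,
      v = ∑ i, v i • (Pi.single i (1 : ℝ) : Fin (n + 1) → ℝ) := by
    intro v; funext a
    rw [Finset.sum_apply]
    simp [Pi.single_apply]
  have hexp1 : ∀ v w : Fin (n + 1) → ℝ, Φ v w = ∑ i, v i * Φ (Pi.single i 1) w := by
    intro v w
    conv_lhs => rw [vec_decomp v]
    rw [map_sum, ContinuousLinearMap.sum_apply]
    refine Finset.sum_congr rfl fun i _ => ?_
    rw [_root_.map_smul, ContinuousLinearMap.smul_apply, smul_eq_mul]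
  have hexp2 : ∀ v w : Fin (n + 1) → ℝ, Φ v w = ∑ j, w j * Φ v (Pi.single j 1) := by
    intro v w
    conv_lhs => rw [vec_decomp w]
    rw [map_sum]
    refine Finset.sum_congr rfl fun j _ => ?_
    rw [_root_.map_smul, smul_eq_mul]
  -- Hessian matrix entries
  have hH : ∀ i j, hessMat h ξ₀ i j = Φ (Pi.single i 1) (Pi.single j 1) := by
    intro i j
    show iteratedFDeriv ℝ 2 h ξ₀ ![Pi.single i 1, Pi.single j 1] = _
    rw [iteratedFDeriv_two_apply]
    simp [hΦdef]
  set G₀ : (Fin n → ℝ) →L[ℝ] (Fin (n + 1) → ℝ) := Emb + Tmap (Dphi ξ₀') with hG₀def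
  have hcrit' : fderiv ℝ h (Fin.snoc ξ₀' (Real.sqrt (qq ξ₀'))) = 0 := by
    rw [hgξ₀]; exact hcrit
  have hA : ∀ k l, hessMat (fun ξ' : Fin n → ℝ =>
      h (Fin.snoc ξ' (Real.sqrt (1 - ∑ j, ξ' j ^ 2)))) ξ₀' k l
      = Φ (G₀ (Pi.single k 1)) (G₀ (Pi.single l 1)) := by
    intro k l
    have hcomp := hess_comp h hsmooth ξ₀' hq0pos hcrit' k l
    rw [hgξ₀, ← hΦdef] at hcomp
    exact hcomp
  -- the Jacobian matrix
  set J : Matrix (Fin (n + 1)) (Fin n) ℝ := Matrix.of fun i k => G₀ (Pi.single k 1) i with hJdef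
  have hJ_cast : ∀ (i k : Fin n), J (Fin.castSucc i) k = (Pi.single k (1 : ℝ) : Fin n → ℝ) i := by
    intro i k
    show G₀ (Pi.single k 1) (Fin.castSucc i) = _
    rw [hG₀def]
    exact Gval_cast _ _ i
  have hDphi_val : ∀ k, Dphi ξ₀' (Pi.single k (1 : ℝ)) = -(ξ₀' k) / sd := by
    intro k
    show ((1 / (2 * Real.sqrt (qq ξ₀'))) • (-(Wmap ξ₀'))) (Pi.single k 1) = _
    rw [hsq]
    have hW : Wmap ξ₀' (Pi.single k (1 : ℝ)) = 2 * ξ₀' k := by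
      simp only [Wmap, ContinuousLinearMap.sum_apply, ContinuousLinearMap.smul_apply,
        ContinuousLinearMap.proj_apply, smul_eq_mul, Pi.single_apply]
      rw [Finset.sum_eq_single k]
      · simp
      · intro b _ hb; simp [hb]
      · intro hk; exact absurd (Finset.mem_univ k) hk
    simp only [ContinuousLinearMap.smul_apply, ContinuousLinearMap.neg_apply, hW, smul_eq_mul]
    field_simp
  have hJ_last : ∀ k, J (Fin.last n) k = -(ξ₀' k) / sd := by
    intro k
    show G₀ (Pi.single k 1) (Fin.last n) = _
    rw [hG₀def, Gval_last, hDphi_val]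
  -- matrix identities
  have hAeq : hessMat (fun ξ' : Fin n → ℝ =>
      h (Fin.snoc ξ' (Real.sqrt (1 - ∑ j, ξ' j ^ 2)))) ξ₀'
      = Jᵀ * hessMat h ξ₀ * J := by
    ext k l
    rw [hA k l, hexp1]
    simp only [Matrix.mul_apply, Matrix.transpose_apply, Finset.sum_mul]
    rw [Finset.sum_comm]
    refine Finset.sum_congr rfl fun i _ => ?_
    rw [hexp2 (Pi.single i 1) (G₀ (Pi.single l 1)), Finset.mul_sum]
    refine Finset.sum_congr rfl fun j _ => ?_
    rw [hH]
    show G₀ (Pi.single k 1) i * (G₀ (Pi.single l 1) j * Φ (Pi.single i 1) (Pi.single j 1))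
      = J i k * Φ (Pi.single i 1) (Pi.single j 1) * J j l
    simp only [hJdef, Matrix.of_apply]
    ring
  rw [hAeq]
  -- hypotheses of the rank lemma
  have hmulVecH : (hessMat h ξ₀) *ᵥ ξ₀ = 0 := by
    funext i
    have e1 : Φ (Pi.single i 1) ξ₀ = 0 := hΦv _
    rw [hexp2] at e1
    show ∑ j, hessMat h ξ₀ i j * ξ₀ j = 0
    rw [← e1]
    refine Finset.sum_congr rfl fun j _ => ?_
    rw [hH]; ring
  have hvecMulH : ξ₀ ᵥ* (hessMat h ξ₀) = 0 := by
    funext j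
    have e1 : Φ ξ₀ (Pi.single j 1) = 0 := by rw [hΦξ₀]; rfl
    rw [hexp1] at e1
    show ∑ i, ξ₀ i * hessMat h ξ₀ i j = 0
    rw [← e1]
    refine Finset.sum_congr rfl fun i _ => ?_
    rw [hH]
  have hvecMulJ : ξ₀ ᵥ* J = 0 := by
    funext k
    show ∑ i, ξ₀ i * J i k = 0
    rw [Fin.sum_univ_castSucc]
    have e1 : ∀ i : Fin n, ξ₀ (Fin.castSucc i) * J (Fin.castSucc i) k
        = (if i = k then ξ₀' i else 0) := by
      intro i
      rw [hJ_cast]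
      simp [hξ₀def, Fin.snoc_castSucc, Pi.single_apply]
    rw [Finset.sum_congr rfl fun i _ => e1 i, Finset.sum_ite_eq' Finset.univ k _]
    have e2 : ξ₀ (Fin.last n) * J (Fin.last n) k = -(ξ₀' k) := by
      rw [hJ_last]
      simp only [hξ₀def, Fin.snoc_last]
      field_simp
    rw [e2]
    simp
  have hJinj : Function.Injective J.mulVec := by
    intro x y hxy
    funext i
    have e1 : ∀ z : Fin n → ℝ, J.mulVec z (Fin.castSucc i) = z i := by
      intro z
      show ∑ k, J (Fin.castSucc i) k * z k = z i
      rw [Finset.sum_congr rfl fun k _ => by rw [hJ_cast]]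
      simp [Pi.single_apply]
    rw [← e1 x, ← e1 y, hxy]
  have hu : ξ₀ ≠ 0 := by
    intro h0
    have := congrFun h0 (Fin.last n)
    simp only [hξ₀def, Fin.snoc_last, Pi.zero_apply] at this
    exact hsd.ne' this
  exact rank_conj (hessMat h ξ₀) J ξ₀ hmulVecH hvecMulH hvecMulJ hJinj hu rfl
end

section
/- Let f(r) = m_1 r² + m_2 r + m_3 and g(r) = m_4 r² + m_5 r + m_6 be real polynomials with (m_1,m_2,m_3) ≠ (0,0,0) and (m_4,m_5,m_6) ≠ (0,0,0), and let c ∈ ℝ \ {0}. If f² + c g² is not identically zero and there exist s ∈ ℝ \ {0} and r_0 ∈ ℝ such that f(r)² + c g(r)² = s (r − r_0)^4 for all r (i.e. f² + c g² has a real root of multiplicity four), then there exists c_0 ∈ ℝ \ {0} with f = c_0 g. -/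
private lemma stmt_11_key (A B D A' B' D' c s : ℝ) (hc : c ≠ 0) (hs : s ≠ 0)
    (hc0 : D^2 + c*D'^2 = 0) (hc1 : B*D + c*B'*D' = 0)
    (hc2 : B^2 + 2*A*D + c*B'^2 + 2*c*A'*D' = 0)
    (hc3 : A*B + c*A'*B' = 0) (hc4 : A^2 + c*A'^2 = s) :
    B = 0 ∧ D = 0 ∧ B' = 0 ∧ D' = 0 := by
  rcases lt_or_ge c 0 with hneg | hpos
  · -- c < 0 : factor through k = sqrt (-c)
    set k := Real.sqrt (-c) with hkdef
    have hk2 : k^2 = -c := Real.sq_sqrt (by linarith)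
    have hk : 0 < k := Real.sqrt_pos.mpr (by linarith)
    set P := A - k*A' with hP
    set P' := A + k*A' with hP'
    set Q := B - k*B' with hQ
    set Q' := B + k*B' with hQ'
    set R := D - k*D' with hR
    set R' := D + k*D' with hR'
    have hPP : P * P' = s := by
      rw [hP, hP']; linear_combination hc4 - A'^2 * hk2
    have hRR : R * R' = 0 := by
      rw [hR, hR']; linear_combination hc0 - D'^2 * hk2
    have hQR : Q * R' + Q' * R = 0 := by
      rw [hQ, hQ', hR, hR']; linear_combination 2*hc1 - 2*B'*D'*hk2
    have hmid : P * R' + Q * Q' + P' * R = 0 := by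
      rw [hP, hP', hQ, hQ', hR, hR']
      linear_combination hc2 - (2*A'*D' + B'^2) * hk2
    have hPQ : P * Q' + P' * Q = 0 := by
      rw [hP, hP', hQ, hQ']; linear_combination 2*hc3 - 2*A'*B'*hk2
    have hPne : P ≠ 0 := fun h => hs (by rw [← hPP, h, zero_mul])
    have hP'ne : P' ≠ 0 := fun h => hs (by rw [← hPP, h, mul_zero])
    have hQRz : Q = 0 ∧ Q' = 0 ∧ R = 0 ∧ R' = 0 := by
      rcases mul_eq_zero.mp hRR with h0 | h0
      · by_cases h1 : R' = 0
        · -- R = R' = 0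
          have hQQ : Q * Q' = 0 := by
            have := hmid; rw [h0, h1] at this; linarith
          rcases mul_eq_zero.mp hQQ with h2 | h2
          · have : P * Q' = 0 := by
              have := hPQ; rw [h2] at this; linarith
            exact ⟨h2, (mul_eq_zero.mp this).resolve_left hPne, h0, h1⟩
          · have : P' * Q = 0 := by
              have := hPQ; rw [h2] at this; linarith
            exact ⟨(mul_eq_zero.mp this).resolve_left hP'ne, h2, h0, h1⟩
        · exfalso
          have hQz : Q = 0 := by
            have := hQR; rw [h0] at this
            have : Q * R' = 0 := by linarith
            exact (mul_eq_zero.mp this).resolve_right h1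
          have : P * R' = 0 := by
            have := hmid; rw [h0, hQz] at this; linarith
          exact h1 ((mul_eq_zero.mp this).resolve_left hPne)
      · by_cases h1 : R = 0
        · have hQQ : Q * Q' = 0 := by
            have := hmid; rw [h0, h1] at this; linarith
          rcases mul_eq_zero.mp hQQ with h2 | h2
          · have : P * Q' = 0 := by
              have := hPQ; rw [h2] at this; linarith
            exact ⟨h2, (mul_eq_zero.mp this).resolve_left hPne, h1, h0⟩
          · have : P' * Q = 0 := by
              have := hPQ; rw [h2] at this; linarith
            exact ⟨(mul_eq_zero.mp this).resolve_left hP'ne, h2, h1, h0⟩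
        · exfalso
          have hQz : Q' = 0 := by
            have := hQR; rw [h0] at this
            have : Q' * R = 0 := by linarith
            exact (mul_eq_zero.mp this).resolve_right h1
          have : P' * R = 0 := by
            have := hmid; rw [h0, hQz] at this; linarith
          exact h1 ((mul_eq_zero.mp this).resolve_left hP'ne)
    obtain ⟨hQ0, hQ'0, hR0, hR'0⟩ := hQRz
    have hkne : k ≠ 0 := ne_of_gt hk
    have hB : B = 0 := by
      have : Q + Q' = 2 * B := by rw [hQ, hQ']; ring
      rw [hQ0, hQ'0] at this; linarith
    have hD : D = 0 := by
      have : R + R' = 2 * D := by rw [hR, hR']; ring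
      rw [hR0, hR'0] at this; linarith
    have hB' : B' = 0 := by
      have h : Q' - Q = 2 * (k * B') := by rw [hQ, hQ']; ring
      rw [hQ0, hQ'0] at h
      have : k * B' = 0 := by linarith
      exact (mul_eq_zero.mp this).resolve_left hkne
    have hD' : D' = 0 := by
      have h : R' - R = 2 * (k * D') := by rw [hR, hR']; ring
      rw [hR0, hR'0] at h
      have : k * D' = 0 := by linarith
      exact (mul_eq_zero.mp this).resolve_left hkne
    exact ⟨hB, hD, hB', hD'⟩
  · -- c > 0
    have hcpos : 0 < c := lt_of_le_of_ne hpos (Ne.symm hc)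
    have hD : D = 0 := by
      have h2 : D^2 = 0 := by nlinarith [mul_nonneg hcpos.le (sq_nonneg D'), sq_nonneg D]
      exact pow_eq_zero_iff two_ne_zero |>.mp h2
    have hD' : D' = 0 := by
      have h2 : D'^2 = 0 := by
        have : c * D'^2 = 0 := by rw [hD] at hc0; linarith
        exact (mul_eq_zero.mp this).resolve_left hc
      exact pow_eq_zero_iff two_ne_zero |>.mp h2
    have hc2' : B^2 + c*B'^2 = 0 := by rw [hD, hD'] at hc2; linarith
    have hB : B = 0 := by
      have h2 : B^2 = 0 := by nlinarith [mul_nonneg hcpos.le (sq_nonneg B'), sq_nonneg B]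
      exact pow_eq_zero_iff two_ne_zero |>.mp h2
    have hB' : B' = 0 := by
      have h2 : B'^2 = 0 := by
        have : c * B'^2 = 0 := by rw [hB] at hc2'; linarith
        exact (mul_eq_zero.mp this).resolve_left hc
      exact pow_eq_zero_iff two_ne_zero |>.mp h2
    exact ⟨hB, hD, hB', hD'⟩

/-- if `f(r) = m₁r² + m₂r + m₃` and `g(r) = m₄r² + m₅r + m₆` are nonzero real
quadratic polynomials, `c ≠ 0`, and `f² + c g²` is not identically zero but equals
`s (r − r₀)⁴` for some `s ≠ 0` and `r₀ ∈ ℝ` (i.e. has a real root of multiplicity four),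
then `f = c₀ g` for some `c₀ ≠ 0`. -/
theorem stmt_11 (m₁ m₂ m₃ m₄ m₅ m₆ c : ℝ)
    (hfg : ¬(m₁ = 0 ∧ m₂ = 0 ∧ m₃ = 0)) (hgg : ¬(m₄ = 0 ∧ m₅ = 0 ∧ m₆ = 0)) (hc : c ≠ 0)
    (hne : ¬ ∀ r : ℝ, (m₁ * r ^ 2 + m₂ * r + m₃) ^ 2 + c * (m₄ * r ^ 2 + m₅ * r + m₆) ^ 2 = 0)
    (hroot : ∃ (s : ℝ) (r₀ : ℝ), s ≠ 0 ∧ ∀ r : ℝ,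
      (m₁ * r ^ 2 + m₂ * r + m₃) ^ 2 + c * (m₄ * r ^ 2 + m₅ * r + m₆) ^ 2 =
        s * (r - r₀) ^ 4) :
    ∃ c₀ : ℝ, c₀ ≠ 0 ∧ ∀ r : ℝ,
      m₁ * r ^ 2 + m₂ * r + m₃ = c₀ * (m₄ * r ^ 2 + m₅ * r + m₆) := by
  obtain ⟨s, r₀, hs, h⟩ := hroot
  have e0 := h r₀
  have e1 := h (r₀ + 1)
  have e2 := h (r₀ - 1)
  have e3 := h (r₀ + 2)
  have e4 := h (r₀ - 2)
  have hc0 : (m₁*r₀^2 + m₂*r₀ + m₃)^2 + c*(m₄*r₀^2 + m₅*r₀ + m₆)^2 = 0 := by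
    linear_combination e0
  have hc4 : m₁^2 + c*m₄^2 = s := by
    linear_combination (e3 + e4)/24 - (e1 + e2)/6 + e0/4
  have hc2 : (m₂ + 2*m₁*r₀)^2 + 2*m₁*(m₁*r₀^2 + m₂*r₀ + m₃)
      + c*(m₅ + 2*m₄*r₀)^2 + 2*c*m₄*(m₄*r₀^2 + m₅*r₀ + m₆) = 0 := by
    linear_combination (2/3)*(e1 + e2) - (e3 + e4)/24 - (5/4)*e0
  have hc3 : m₁*(m₂ + 2*m₁*r₀) + c*m₄*(m₅ + 2*m₄*r₀) = 0 := by
    linear_combination (e3 - e4)/24 - (e1 - e2)/12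
  have hc1 : (m₂ + 2*m₁*r₀)*(m₁*r₀^2 + m₂*r₀ + m₃)
      + c*(m₅ + 2*m₄*r₀)*(m₄*r₀^2 + m₅*r₀ + m₆) = 0 := by
    linear_combination (1/3)*(e1 - e2) - (e3 - e4)/24
  obtain ⟨hB, hD, hB', hD'⟩ :=
    stmt_11_key m₁ (m₂ + 2*m₁*r₀) (m₁*r₀^2 + m₂*r₀ + m₃)
      m₄ (m₅ + 2*m₄*r₀) (m₄*r₀^2 + m₅*r₀ + m₆) c s hc hs hc0 hc1 hc2 hc3 hc4
  have hm2 : m₂ = -2*m₁*r₀ := by linarith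
  have hm3 : m₃ = m₁*r₀^2 := by linear_combination hD - r₀*hm2
  have hm5 : m₅ = -2*m₄*r₀ := by linarith
  have hm6 : m₆ = m₄*r₀^2 := by linear_combination hD' - r₀*hm5
  have hm1 : m₁ ≠ 0 := by
    intro h1
    exact hfg ⟨h1, by rw [hm2, h1]; ring, by rw [hm3, h1]; ring⟩
  have hm4 : m₄ ≠ 0 := by
    intro h4
    exact hgg ⟨h4, by rw [hm5, h4]; ring, by rw [hm6, h4]; ring⟩
  refine ⟨m₁ / m₄, div_ne_zero hm1 hm4, fun r => ?_⟩
  rw [hm2, hm3, hm5, hm6]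
  field_simp
end

section
/- Let P̃_4(z) = (z_1 + z_2 + z_3 + z_4)³ − (z_1³ + z_2³ + z_3³ + z_4³) on ℝ^4. Then (i) the first-order partial derivatives ∂_1 P̃_4, ∂_2 P̃_4, ∂_3 P̃_4, ∂_4 P̃_4 are linearly independent over ℝ: if a_1, a_2, a_3, a_4 ∈ ℝ and Σ_{j=1}^{4} a_j ∂_j P̃_4(z) = 0 for all z ∈ ℝ^4, then a_1 = a_2 = a_3 = a_4 = 0; and (ii) the origin is the only critical point of P̃_4: if ∇P̃_4(z) = 0 for some z ∈ ℝ^4, then z = 0. -/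
noncomputable def P4t (z : Fin 4 → ℝ) : ℝ :=
  (∑ j, z j) ^ 3 - ∑ j, (z j) ^ 3

lemma hasFDerivAt_cube {f : (Fin 4 → ℝ) → ℝ} {f' : (Fin 4 → ℝ) →L[ℝ] ℝ} {z : Fin 4 → ℝ}
    (hf : HasFDerivAt f f' z) :
    HasFDerivAt (fun x => f x ^ 3) ((3 * f z ^ 2) • f') z := by
  have h := (hf.mul hf).mul hf
  have e1 : (fun x => f x ^ 3) = f * f * f := by ext x; simp only [Pi.mul_apply]; ring
  have e2 : (3 * f z ^ 2) • f' = (f * f) z • f' + f z • (f z • f' + f z • f') := by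
    ext v
    simp only [ContinuousLinearMap.smul_apply, ContinuousLinearMap.add_apply, Pi.mul_apply,
      smul_eq_mul]
    ring
  rw [e1, e2]; exact h

lemma P4t_hasFDerivAt (z : Fin 4 → ℝ) :
    HasFDerivAt P4t
      ((3 * (∑ i, z i) ^ 2) • (∑ i : Fin 4, ContinuousLinearMap.proj (R := ℝ)
          (φ := fun _ : Fin 4 => ℝ) i)
        - ∑ i : Fin 4, (3 * (z i) ^ 2) • ContinuousLinearMap.proj (R := ℝ)
          (φ := fun _ : Fin 4 => ℝ) i) z := by
  have h1 : HasFDerivAt (fun z : Fin 4 → ℝ => ∑ i, z i)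
      (∑ i : Fin 4, ContinuousLinearMap.proj (R := ℝ) (φ := fun _ : Fin 4 => ℝ) i) z := by
    have := (∑ i : Fin 4, ContinuousLinearMap.proj (R := ℝ)
        (φ := fun _ : Fin 4 => ℝ) i).hasFDerivAt (x := z)
    convert this using 2 <;> simp
  have h2 : ∀ i : Fin 4, HasFDerivAt (fun z : Fin 4 → ℝ => (z i) ^ 3)
      ((3 * (z i) ^ 2) • ContinuousLinearMap.proj (R := ℝ) (φ := fun _ : Fin 4 => ℝ) i) z := by
    intro i
    exact hasFDerivAt_cube ((ContinuousLinearMap.proj (R := ℝ)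
      (φ := fun _ : Fin 4 => ℝ) i).hasFDerivAt (x := z))
  exact (hasFDerivAt_cube h1).sub (HasFDerivAt.fun_sum (fun i _ => h2 i))

lemma P4t_fderiv (z : Fin 4 → ℝ) (j : Fin 4) :
    fderiv ℝ P4t z (Pi.single j 1) = 3 * (∑ i, z i) ^ 2 - 3 * (z j) ^ 2 := by
  rw [(P4t_hasFDerivAt z).fderiv]
  simp [ContinuousLinearMap.sum_apply, Pi.single_apply, Finset.sum_ite_eq', mul_comm]

/-- (i) the first-order partial derivatives of `P̃₄` are linearly independent
over `ℝ`; (ii) the origin is the only critical point of `P̃₄`. -/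
theorem stmt_18 :
    (∀ a : Fin 4 → ℝ,
      (∀ z : Fin 4 → ℝ, ∑ j, a j * fderiv ℝ P4t z (Pi.single j 1) = 0) →
      ∀ j, a j = 0) ∧
    (∀ z : Fin 4 → ℝ, (∀ j, fderiv ℝ P4t z (Pi.single j 1) = 0) → z = 0) := by
  constructor
  · intro a h k
    have e0 := h ![1, 0, 0, 0]
    have e1 := h ![0, 1, 0, 0]
    have e2 := h ![0, 0, 1, 0]
    have e3 := h ![0, 0, 0, 1]
    simp only [P4t_fderiv, Fin.sum_univ_four] at e0 e1 e2 e3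
    norm_num [Matrix.cons_val_zero, Matrix.cons_val_one, Matrix.cons_val_two,
      Matrix.cons_val_three] at e0 e1 e2 e3
    fin_cases k
    · show a 0 = 0; linarith
    · show a 1 = 0; linarith
    · show a 2 = 0; linarith
    · show a 3 = 0; linarith
  · intro z h
    have e0 := h 0; have e1 := h 1; have e2 := h 2; have e3 := h 3
    simp only [P4t_fderiv, Fin.sum_univ_four] at e0 e1 e2 e3
    obtain ⟨s, hs⟩ : ∃ s, z 0 + z 1 + z 2 + z 3 = s := ⟨_, rfl⟩
    rw [hs] at e0 e1 e2 e3
    have f0 : (z 0 - s) * (z 0 + s) = 0 := by linear_combination (-1/3 : ℝ) * e0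
    have f1 : (z 1 - s) * (z 1 + s) = 0 := by linear_combination (-1/3 : ℝ) * e1
    have f2 : (z 2 - s) * (z 2 + s) = 0 := by linear_combination (-1/3 : ℝ) * e2
    have f3 : (z 3 - s) * (z 3 + s) = 0 := by linear_combination (-1/3 : ℝ) * e3
    rw [mul_eq_zero] at f0 f1 f2 f3
    have hs0 : s = 0 := by
      rcases f0 with f0 | f0 <;> rcases f1 with f1 | f1 <;>
        rcases f2 with f2 | f2 <;> rcases f3 with f3 | f3 <;> linarith
    funext j
    fin_cases j
    · show z 0 = 0; rcases f0 with f0 | f0 <;> linarith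
    · show z 1 = 0; rcases f1 with f1 | f1 <;> linarith
    · show z 2 = 0; rcases f2 with f2 | f2 <;> linarith
    · show z 3 = 0; rcases f3 with f3 | f3 <;> linarith
end
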